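/- Let R ⊆ S be a pure extension of Noetherian commutative rings of prime characteristic p such that R° ⊆ S°. Then for any ideal a of R, one has τ(aS) ∩ R ⊆ τ(a). -/

import Mathlib

open TensorProduct

universe u v

section TightClosureBasics

variable (R : Type u) [CommRing R]

/-- `R°`: the set of elements of `R` not contained in any minimal prime ideal. -/
def Rcirc : Set R := {c | ∀ P ∈ minimalPrimes R, c ∉ P}

/-- `I^{[q]}`: the ideal generated by the `q`-th powers of elements of `I`. -/
def idealBracketPow (I : Ideal R) (q : ℕ) : Ideal R :=
  Ideal.span ((fun x => x ^ q) '' (I : Set R))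

/-- The `a`-tight closure `I^{*a}` of an ideal `I ⊆ R` (as a subset of `R`):
all `z` such that for some `c ∈ R°` one has `c z^q a^q ⊆ I^{[q]}` for all `q = p^e ≫ 0`. -/
def idealTC (p : ℕ) (a I : Ideal R) : Set R :=
  {z | ∃ c ∈ Rcirc R, ∃ e₀ : ℕ, ∀ e, e₀ ≤ e → ∀ α ∈ a ^ p ^ e,
    c * z ^ p ^ e * α ∈ idealBracketPow R I (p ^ e)}

variable (p : ℕ) [Fact p.Prime] [CharP R p]

/-- `ᵉR`: the ring `R` viewed as an `R`-algebra via the `e`-fold Frobenius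
`x ↦ x ^ p ^ e`. -/
def FrobAlg (_p _e : ℕ) : Type u := R

instance (e : ℕ) : CommRing (FrobAlg R p e) := inferInstanceAs (CommRing R)

noncomputable instance (e : ℕ) : Algebra R (FrobAlg R p e) :=
  RingHom.toAlgebra (iterateFrobenius R p e)

/-- The Frobenius functor `F^e(M) = ᵉR ⊗_R M`, an `R`-module via the left factor. -/
def FrobPow (e : ℕ) (M : Type v) [AddCommGroup M] [Module R M] : Type (max u v) :=
  TensorProduct R (FrobAlg R p e) M

variable {M : Type v} [AddCommGroup M] [Module R M]

noncomputable instance (e : ℕ) : AddCommGroup (FrobPow R p e M) :=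
  inferInstanceAs (AddCommGroup (TensorProduct R (FrobAlg R p e) M))

noncomputable instance (e : ℕ) : Module R (FrobPow R p e M) :=
  inferInstanceAs (Module (FrobAlg R p e) (TensorProduct R (FrobAlg R p e) M))

/-- The `e`-times iterated Frobenius map `M → F^e(M)`, `z ↦ z^q := 1 ⊗ z`. -/
noncomputable def frobM (e : ℕ) (z : M) : FrobPow R p e M :=
  (1 : FrobAlg R p e) ⊗ₜ[R] z

/-- `N^{[q]}_M`: the image of `F^e(N) → F^e(M)`, i.e. the `R`-span of the image of
`N` under the Frobenius map `M → F^e(M)`. -/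
noncomputable def bracketPow (e : ℕ) (N : Submodule R M) : Submodule R (FrobPow R p e M) :=
  Submodule.span R (frobM R p e '' (N : Set M))

/-- The `a`-tight closure `N^{*a}_M` of a submodule `N ⊆ M`: all `z ∈ M` such that for
some `c ∈ R°` one has `c z^q a^q ⊆ N^{[q]}_M` for all `q = p^e ≫ 0`. -/
noncomputable def modTC (a : Ideal R) (N : Submodule R M) : Set M :=
  {z | ∃ c ∈ Rcirc R, ∃ e₀ : ℕ, ∀ e, e₀ ≤ e → ∀ α ∈ a ^ p ^ e,
    (c * α) • frobM R p e z ∈ bracketPow R p e N}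

/-- The annihilator ideal of a subset of a module. -/
def setAnn (S : Set M) : Ideal R where
  carrier := {r | ∀ z ∈ S, r • z = 0}
  add_mem' := by
    intro r s hr hs z hz
    rw [add_smul, hr z hz, hs z hz, add_zero]
  zero_mem' := by
    intro z _
    rw [zero_smul]
  smul_mem' := by
    intro c r hr z hz
    rw [smul_eq_mul, mul_smul, hr z hz, smul_zero]

/-- `τ(a)`: the intersection, over all finitely generated `R`-modules `M`, of
`Ann_R (0^{*a}_M)`. -/
noncomputable def tauIdeal (a : Ideal R) : Ideal R where
  carrier := {r | ∀ (N : Type u) [AddCommGroup N] [Module R N], Module.Finite R N →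
      ∀ z ∈ modTC R p a (⊥ : Submodule R N), r • z = 0}
  add_mem' := by
    intro r s hr hs N _ _ hN z hz
    rw [add_smul, hr N hN z hz, hs N hN z hz, add_zero]
  zero_mem' := by
    intro N _ _ _ z _
    rw [zero_smul]
  smul_mem' := by
    intro c r hr N _ _ hN z hz
    rw [smul_eq_mul, mul_smul, hr N hN z hz, smul_zero]

end TightClosureBasics

section RegularExcellent

/-- A regular local ring: a Noetherian local ring whose maximal ideal can be generated
by `dim R` elements. -/
def IsRegularLocal (A : Type v) [CommRing A] : Prop :=
  ∃ h : IsLocalRing A, letI := h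
  IsNoetherianRing A ∧
    ∃ s : Finset A, Ideal.span (s : Set A) = IsLocalRing.maximalIdeal A ∧
      (s.card : WithBot ℕ∞) = ringKrullDim A

/-- A `k`-algebra `C` over a field `k` is geometrically regular if for every finite field
extension `k'` of `k` all localizations of `k' ⊗_k C` at primes are regular local rings. -/
def IsGeometricallyRegular (k : Type u) (C : Type u) [Field k] [CommRing C] [Algebra k C] :
    Prop :=
  ∀ (k' : Type u) [Field k'] [Algebra k k'], Module.Finite k k' →
    ∀ (Q : Ideal (TensorProduct k k' C)) (hQ : Q.IsPrime), letI := hQ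
      IsRegularLocal (Localization.AtPrime Q)

/-- `A` is a G-ring (Grothendieck ring): for every prime `P` of `A` the fibres of the
completion map `A_P → (A_P)^` are geometrically regular. -/
def IsGRing (A : Type u) [CommRing A] : Prop :=
  ∀ (P : Ideal A) (hP : P.IsPrime), letI := hP
    ∀ (Q : Ideal (Localization.AtPrime P)) (hQ : Q.IsPrime), letI := hQ
      IsGeometricallyRegular
        (IsLocalRing.ResidueField (Localization.AtPrime Q))
        (TensorProduct (Localization.AtPrime P)
          (IsLocalRing.ResidueField (Localization.AtPrime Q))
          (AdicCompletion (IsLocalRing.maximalIdeal (Localization.AtPrime P))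
            (Localization.AtPrime P)))

/-- A ring is catenary if any two saturated chains of primes with the same endpoints
have the same length. -/
def IsCatenary (A : Type*) [CommRing A] : Prop :=
  ∀ c d : LTSeries (PrimeSpectrum A),
    (∀ i : Fin c.length, c.toFun i.castSucc ⋖ c.toFun i.succ) →
    (∀ i : Fin d.length, d.toFun i.castSucc ⋖ d.toFun i.succ) →
    c.head = d.head → c.last = d.last → c.length = d.length

/-- `A` is J-2: the regular locus of every finitely generated `A`-algebra is open. -/
def IsJ2 (A : Type u) [CommRing A] : Prop :=
  ∀ (n : ℕ) (I : Ideal (MvPolynomial (Fin n) A)),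
    IsOpen {P : PrimeSpectrum (MvPolynomial (Fin n) A ⧸ I) |
      IsRegularLocal (Localization.AtPrime P.asIdeal)}

/-- An excellent ring: a Noetherian, universally catenary G-ring satisfying J-2. -/
def IsExcellent (A : Type u) [CommRing A] : Prop :=
  IsNoetherianRing A ∧ (∀ n : ℕ, IsCatenary (MvPolynomial (Fin n) A)) ∧
    IsGRing A ∧ IsJ2 A

/-- A ring is equidimensional if all its minimal primes have the same dimension. -/
def IsEquidimensional (A : Type*) [CommRing A] : Prop :=
  ∀ P ∈ minimalPrimes A, ringKrullDim (A ⧸ P) = ringKrullDim A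

end RegularExcellent

section Misc

variable (R : Type u) [CommRing R]

/-- `x : Fin n → A` is a system of parameters of the local ring `A`: `n = dim A` and
the `x i` generate an ideal primary to the maximal ideal. -/
def IsSOP (A : Type v) [CommRing A] [IsLocalRing A] (n : ℕ) (x : Fin n → A) : Prop :=
  (n : WithBot ℕ∞) = ringKrullDim A ∧
    (Ideal.span (Set.range x)).radical = IsLocalRing.maximalIdeal A

/-- A local ring is F-rational if every ideal generated by a system of parameters is
tightly closed. -/
def IsFRational (A : Type v) [CommRing A] [IsLocalRing A] (p : ℕ) : Prop :=
  ∀ (n : ℕ) (x : Fin n → A), IsSOP A n x →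
    idealTC A p ⊤ (Ideal.span (Set.range x)) = (Ideal.span (Set.range x) : Set A)

/-- The tight integral closure `{I_1, …, I_n}^{⎯*}` of a family of ideals. -/
def tightIntClosure (p : ℕ) {n : ℕ} (I : Fin n → Ideal R) : Set R :=
  {x | ∃ c ∈ Rcirc R, ∃ e₀ : ℕ, ∀ e, e₀ ≤ e → c * x ^ p ^ e ∈ ∑ i, (I i) ^ p ^ e}

/-- The integral closure of an ideal `J`: all elements satisfying an integral equation
`x^n + a_1 x^{n-1} + ⋯ + a_n = 0` with `a_i ∈ J^i`. -/
def integralClosureOfIdeal (J : Ideal R) : Set R :=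
  {x | ∃ n : ℕ, 0 < n ∧ ∃ a : ℕ → R, (∀ i ∈ Finset.range n, a i ∈ J ^ (i + 1)) ∧
    x ^ n + ∑ i ∈ Finset.range n, a i * x ^ (n - 1 - i) = 0}

/-- `x_1, …, x_n` are parameters: the ideal generated by the first `i` of them has
height at least `i`, for each `i`. -/
def AreParameters {n : ℕ} (x : Fin n → R) : Prop :=
  ∀ i : ℕ, i ≤ n → ∀ (P : Ideal R) (hP : P.IsPrime),
    Ideal.span (x '' {j : Fin n | (j : ℕ) < i}) ≤ P →
      (i : ℕ∞) ≤ Order.height (⟨P, hP⟩ : PrimeSpectrum R)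

/-- A regular sequence: each `x i` is a non-zerodivisor modulo its predecessors. -/
def IsRegSeq {n : ℕ} (x : Fin n → R) : Prop :=
  ∀ i : Fin n, ∀ z : R,
    x i * z ∈ Ideal.span (x '' {j : Fin n | j < i}) →
      z ∈ Ideal.span (x '' {j : Fin n | j < i})

/-- A prime ideal of height one. -/
def IsHeightOnePrime (P : Ideal R) : Prop :=
  ∃ hP : P.IsPrime, Order.height (⟨P, hP⟩ : PrimeSpectrum R) = 1

/-- The `r`-th symbolic power of a (divisorial) ideal `J` in a normal domain:
the intersection of the height-one primary components `J^r R_P ∩ R`. -/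
def symbolicPow (J : Ideal R) (r : ℕ) : Ideal R where
  carrier := {x | ∀ P : Ideal R, IsHeightOnePrime R P → ∃ s ∉ P, s * x ∈ J ^ r}
  zero_mem' := by
    intro P hP
    obtain ⟨hP', -⟩ := hP
    exact ⟨1, (Ideal.ne_top_iff_one P).mp hP'.ne_top, by simp⟩
  add_mem' := by
    intro x y hx hy P hP
    obtain ⟨s, hs, hsx⟩ := hx P hP
    obtain ⟨t, ht, hty⟩ := hy P hP
    obtain ⟨hP', -⟩ := hP
    refine ⟨s * t, fun hmem => ?_, ?_⟩
    · rcases hP'.mem_or_mem hmem with h | h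
      · exact hs h
      · exact ht h
    · have heq : s * t * (x + y) = t * (s * x) + s * (t * y) := by ring
      rw [heq]
      exact Ideal.add_mem _ (Ideal.mul_mem_left _ _ hsx) (Ideal.mul_mem_left _ _ hty)
  smul_mem' := by
    intro c x hx P hP
    obtain ⟨s, hs, hsx⟩ := hx P hP
    refine ⟨s, hs, ?_⟩
    have heq : s * (c • x) = c * (s * x) := by
      simp only [smul_eq_mul]; ring
    rw [heq]
    exact Ideal.mul_mem_left _ _ hsx

/-- Data of an injective hull `E = E_A(A/m)` of the residue field of a local ring:
an injective module together with an essential embedding of the residue field. -/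
structure InjectiveHullRF (A : Type u) [CommRing A] [IsLocalRing A] where
  E : Type u
  [acg : AddCommGroup E]
  [mod : Module A E]
  injective : Module.Injective A E
  emb : (A ⧸ IsLocalRing.maximalIdeal A) →ₗ[A] E
  emb_inj : Function.Injective emb
  essential : ∀ N : Submodule A E, N ≠ ⊥ → N ⊓ LinearMap.range emb ≠ ⊥

attribute [instance] InjectiveHullRF.acg InjectiveHullRF.mod

/-- `ω` is a canonical ideal of the local ring `A`: an ideal whose Matlis dual is the
top local cohomology module `H^d_m(A)`. -/
def IsCanonicalIdeal (A : Type u) [CommRing A] [IsLocalRing A] (ω : Ideal A) : Prop :=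
  ∃ d : ℕ, ringKrullDim A = d ∧
    ∃ hull : InjectiveHullRF A,
      Nonempty ((ω →ₗ[A] hull.E) ≃ₗ[A]
        ((localCohomology (IsLocalRing.maximalIdeal A) d).obj (ModuleCat.of A A)))

/-- A normal local ring is `ℚ`-Gorenstein if it admits a canonical module (here realized
as a canonical ideal `ω`) some symbolic power `ω^{(r)}`, `r ≥ 1`, of which is principal,
i.e. isomorphic to `A`. -/
def IsQGorenstein (A : Type u) [CommRing A] [IsLocalRing A] : Prop :=
  ∃ ω : Ideal A, ω ≠ ⊥ ∧ IsCanonicalIdeal A ω ∧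
    ∃ r : ℕ, 1 ≤ r ∧ ∃ f : A, symbolicPow A ω r = Ideal.span {f}

variable (p : ℕ) [Fact p.Prime] [CharP R p]

/-- `ᵉR` as an `R`-module via restriction of scalars along the `e`-fold Frobenius:
`r • x = r ^ (p ^ e) * x`. -/
def FrobRestrict (_p _e : ℕ) : Type u := R

instance (e : ℕ) : AddCommGroup (FrobRestrict R p e) := inferInstanceAs (AddCommGroup R)

noncomputable instance (e : ℕ) : Module R (FrobRestrict R p e) :=
  Module.compHom R (iterateFrobenius R p e)

/-- `R` is F-finite: `¹R` is a finitely generated `R`-module. -/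
def IsFFinite : Prop := Module.Finite R (FrobRestrict R p 1)

/-- A reduced ring `A` of characteristic `p` is strongly F-regular if for every
`c ∈ A°` there is `q = p^e` such that the inclusion `c^{1/q} A ⊆ A^{1/q}` splits
`A`-linearly; equivalently (identifying `A^{1/q}` with `A` via the `q`-th power map)
there is an additive map `φ : A → A` with `φ (r^q * x) = r * φ x` for all `r, x` and
`φ c = 1`. -/
def StronglyFRegular (A : Type v) [CommRing A] (p : ℕ) : Prop :=
  ∀ c ∈ Rcirc A, ∃ e : ℕ, ∃ φ : A →+ A,
    (∀ r x : A, φ (r ^ p ^ e * x) = r * φ x) ∧ φ c = 1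

/-- `c` is an `a`-test element: `c ∈ R°` and `c z^q a^q ⊆ I^{[q]}` for every ideal `I`,
every `z ∈ I^{*a}` and every `q = p^e`. -/
def IsTestElementFor (a : Ideal R) (c : R) : Prop :=
  c ∈ Rcirc R ∧
    ∀ I : Ideal R, ∀ z ∈ idealTC R p a I, ∀ e : ℕ, ∀ α ∈ a ^ p ^ e,
      c * z ^ p ^ e * α ∈ idealBracketPow R I (p ^ e)

end Misc


section ProofAux

variable (R : Type u) [CommRing R] (p : ℕ) [Fact p.Prime] [CharP R p]

lemma bracketPow_bot (e : ℕ) (M : Type v) [AddCommGroup M] [Module R M] :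
    bracketPow R p e (⊥ : Submodule R M) = ⊥ := by
  unfold bracketPow
  rw [Submodule.bot_coe, Set.image_singleton]
  have h : frobM R p e (0 : M) = 0 := TensorProduct.tmul_zero _ _
  rw [h, Submodule.span_zero_singleton]

/-- The identity map `R → ᵉR`, used to control elaboration. -/
def toFrob (x : R) (e : ℕ) : FrobAlg R p e := x

lemma smul_frobM (e : ℕ) {M : Type v} [AddCommGroup M] [Module R M] (r : R) (z : M) :
    r • frobM R p e z
      = (toFrob R p r e ⊗ₜ[R] z : TensorProduct R (FrobAlg R p e) M) := by
  have h1 : r • frobM R p e z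
      = (toFrob R p (r * 1) e ⊗ₜ[R] z : TensorProduct R (FrobAlg R p e) M) := rfl
  rw [h1, mul_one]

lemma frobAlg_smul (e : ℕ) (σ x : R) :
    σ • toFrob R p x e = toFrob R p (σ ^ p ^ e * x) e := by
  show iterateFrobenius R p e σ * x = σ ^ p ^ e * x
  rw [iterateFrobenius_def]

variable (S : Type v) [CommRing S] [CharP S p] [Algebra R S]

variable {N : Type u} [AddCommGroup N] [Module R N]
variable {M' : Type v} [AddCommGroup M'] [Module S M']

/-- The canonical bi-additive map `ᵉR × N → ᵉS ⊗_S M'` induced by a semilinear map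
`φ : N → M'`, with an extra factor `s`. -/
noncomputable def auxB (e : ℕ) (φ : N →+ M') (s : S) :
    FrobAlg R p e →+ N →+ TensorProduct S (FrobAlg S p e) M' where
  toFun x :=
    { toFun := fun n => toFrob S p (s * algebraMap R S x) e ⊗ₜ[S] φ n
      map_zero' := by
        show toFrob S p (s * algebraMap R S x) e ⊗ₜ[S] φ 0 = 0
        rw [map_zero, TensorProduct.tmul_zero]
      map_add' := fun n₁ n₂ => by
        show toFrob S p (s * algebraMap R S x) e ⊗ₜ[S] φ (n₁ + n₂)
          = toFrob S p (s * algebraMap R S x) e ⊗ₜ[S] φ n₁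
            + toFrob S p (s * algebraMap R S x) e ⊗ₜ[S] φ n₂
        rw [map_add, TensorProduct.tmul_add] }
  map_zero' := by
    ext n
    show toFrob S p (s * algebraMap R S (0 : R)) e ⊗ₜ[S] φ n = 0
    rw [map_zero, mul_zero]
    exact TensorProduct.zero_tmul _ _
  map_add' x y := by
    ext n
    show toFrob S p (s * algebraMap R S ((show R from x) + (show R from y))) e ⊗ₜ[S] φ n
      = toFrob S p (s * algebraMap R S x) e ⊗ₜ[S] φ n
        + toFrob S p (s * algebraMap R S y) e ⊗ₜ[S] φ n
    rw [map_add, mul_add]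
    exact TensorProduct.add_tmul _ _ _

lemma auxB_balanced (e : ℕ) (φ : N →+ M')
    (hφ : ∀ (r : R) (n : N), φ (r • n) = algebraMap R S r • φ n) (s : S) :
    ∀ (r' : R) (x : FrobAlg R p e) (n : N),
      auxB R p S e φ s (r' • x) n = auxB R p S e φ s x (r' • n) := by
  intro r' x n
  show toFrob S p (s * algebraMap R S (r' • x)) e ⊗ₜ[S] φ n
      = toFrob S p (s * algebraMap R S x) e ⊗ₜ[S] φ (r' • n)
  have hx : (r' • x : FrobAlg R p e) = toFrob R p (r' ^ p ^ e * (show R from x)) e :=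
    frobAlg_smul R p e r' (show R from x)
  rw [hφ r' n, ← TensorProduct.smul_tmul, frobAlg_smul S p e, hx]
  congr 1
  show s * algebraMap R S (r' ^ p ^ e * (show R from x))
      = algebraMap R S r' ^ p ^ e * (s * algebraMap R S x)
  rw [map_mul, map_pow]
  ring

lemma frob_base_change_vanish (e : ℕ) (φ : N →+ M')
    (hφ : ∀ (r : R) (n : N), φ (r • n) = algebraMap R S r • φ n) (s : S) (y : R) (z : N)
    (h : (toFrob R p y e ⊗ₜ[R] z : TensorProduct R (FrobAlg R p e) N) = 0) :
    (toFrob S p (s * algebraMap R S y) e ⊗ₜ[S] φ z :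
      TensorProduct S (FrobAlg S p e) M') = 0 := by
  have h2 := congrArg
    (⇑(TensorProduct.liftAddHom (auxB R p S e φ s) (auxB_balanced R p S e φ hφ s))) h
  rw [map_zero, TensorProduct.liftAddHom_tmul] at h2
  exact h2

/-- The canonical semilinear map `N → M'` where `M'` is a model of `S ⊗_R N`. -/
noncomputable def auxPhi (g : M' ≃ₗ[S] TensorProduct R S N) : N →+ M' where
  toFun n := g.symm ((1 : S) ⊗ₜ[R] n)
  map_zero' := by
    show g.symm ((1 : S) ⊗ₜ[R] (0 : N)) = 0
    rw [TensorProduct.tmul_zero, map_zero]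
  map_add' n₁ n₂ := by
    show g.symm ((1 : S) ⊗ₜ[R] (n₁ + n₂)) = g.symm ((1 : S) ⊗ₜ[R] n₁) + g.symm ((1 : S) ⊗ₜ[R] n₂)
    rw [TensorProduct.tmul_add, map_add]

lemma auxPhi_semilinear (g : M' ≃ₗ[S] TensorProduct R S N) (r : R) (n : N) :
    auxPhi R S g (r • n) = algebraMap R S r • auxPhi R S g n := by
  show g.symm ((1 : S) ⊗ₜ[R] (r • n)) = algebraMap R S r • g.symm ((1 : S) ⊗ₜ[R] n)
  rw [← map_smul]
  congr 1
  rw [← TensorProduct.smul_tmul, TensorProduct.smul_tmul', smul_eq_mul, mul_one,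
    ← Algebra.algebraMap_eq_smul_one]

end ProofAux

/-- **Proposition 1.12.** If `R ⊆ S` is a pure extension of Noetherian rings of prime
characteristic `p` with `R° ⊆ S°`, then `τ(aS) ∩ R ⊆ τ(a)` for every ideal `a` of `R`. -/
theorem tau_map_comap_le_tau_of_pure
    (R : Type u) (S : Type v) [CommRing R] [CommRing S]
    [IsNoetherianRing R] [IsNoetherianRing S]
    (p : ℕ) [Fact p.Prime] [CharP R p] [CharP S p]
    [Algebra R S] (hinj : Function.Injective (algebraMap R S))
    (hpure : ∀ (M : Type u) [AddCommGroup M] [Module R M],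
      Function.Injective fun m : M => (m ⊗ₜ[R] (1 : S) : TensorProduct R M S))
    (hcirc : ∀ c ∈ Rcirc R, algebraMap R S c ∈ Rcirc S)
    (a : Ideal R) :
    Ideal.comap (algebraMap R S) (tauIdeal S p (a.map (algebraMap R S))) ≤
      tauIdeal R p a := by
  intro r hr
  have hrS : ∀ (N : Type v) [AddCommGroup N] [Module S N], Module.Finite S N →
      ∀ z ∈ modTC S p (a.map (algebraMap R S)) (⊥ : Submodule S N),
        algebraMap R S r • z = 0 := Ideal.mem_comap.mp hr
  show ∀ (N : Type u) [AddCommGroup N] [Module R N], Module.Finite R N →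
      ∀ z ∈ modTC R p a (⊥ : Submodule R N), r • z = 0
  intro N _ _ hN z hz
  haveI := hN
  obtain ⟨c, hc, e₀, hcz⟩ := hz
  haveI : Small.{v} (TensorProduct R S N) := by
    obtain ⟨n, φ, hφ⟩ := Module.Finite.exists_fin' S (TensorProduct R S N)
    exact small_of_surjective hφ
  let M' : Type v := Shrink.{v} (TensorProduct R S N)
  let g : M' ≃ₗ[S] TensorProduct R S N := Shrink.linearEquiv S _
  haveI : Module.Finite S M' := Module.Finite.equiv g.symm
  set w : M' := auxPhi R S g z with hw_def
  have key : ∀ e : ℕ, e₀ ≤ e → ∀ α ∈ a ^ p ^ e, ∀ s : S,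
      (toFrob S p (s * algebraMap R S (c * α)) e ⊗ₜ[S] w :
        TensorProduct S (FrobAlg S p e) M') = 0 := by
    intro e he α hα s
    have h1 : (toFrob R p (c * α) e ⊗ₜ[R] z :
        TensorProduct R (FrobAlg R p e) N) = 0 := by
      have h2 := hcz e he α hα
      rw [bracketPow_bot, Submodule.mem_bot] at h2
      rw [← smul_frobM R p e (c * α) z]
      exact h2
    exact frob_base_change_vanish R p S e (auxPhi R S g)
      (auxPhi_semilinear R S g) s (c * α) z h1
  have hw : w ∈ modTC S p (a.map (algebraMap R S)) (⊥ : Submodule S M') := by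
    refine ⟨algebraMap R S c, hcirc c hc, e₀, ?_⟩
    intro e he β hβ
    rw [bracketPow_bot, Submodule.mem_bot, smul_frobM S p e _ w]
    have hβ' : β ∈ Ideal.map (algebraMap R S) (a ^ p ^ e) := by
      rw [Ideal.map_pow]; exact hβ
    clear hβ
    have main : ∀ s : S,
        (toFrob S p (s * (algebraMap R S c * β)) e ⊗ₜ[S] w :
          TensorProduct S (FrobAlg S p e) M') = 0 := by
      rw [Ideal.map] at hβ'
      induction hβ' using Submodule.span_induction with
      | mem x hx =>
        obtain ⟨α, hα, rfl⟩ := hx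
        intro s
        have h := key e he α hα s
        rw [map_mul] at h
        exact h
      | zero =>
        intro s
        rw [mul_zero, mul_zero]
        exact TensorProduct.zero_tmul _ _
      | add x y hx hy ihx ihy =>
        intro s
        rw [mul_add, mul_add]
        show (toFrob S p (s * (algebraMap R S c * x)) e
            + toFrob S p (s * (algebraMap R S c * y)) e) ⊗ₜ[S] w = 0
        rw [TensorProduct.add_tmul, ihx s, ihy s, add_zero]
      | smul t x hx ih =>
        intro s
        rw [smul_eq_mul, show s * (algebraMap R S c * (t * x))
            = (s * t) * (algebraMap R S c * x) by ring]
        exact ih (s * t)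
    have hm := main 1
    rwa [one_mul] at hm
  have h0 : algebraMap R S r • w = 0 := hrS M' inferInstance w hw
  have h1 : algebraMap R S r • ((1 : S) ⊗ₜ[R] z : TensorProduct R S N) = 0 := by
    have h2 := congrArg g h0
    rw [map_smul, map_zero, hw_def] at h2
    have h3 : g (auxPhi R S g z) = (1 : S) ⊗ₜ[R] z := g.apply_symm_apply _
    rw [h3] at h2
    exact h2
  rw [algebraMap_smul] at h1
  have h3 : ((1 : S) ⊗ₜ[R] (r • z) : TensorProduct R S N) = 0 := by
    rw [TensorProduct.tmul_smul]
    exact h1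
  have h4 := congrArg (TensorProduct.comm R S N) h3
  rw [map_zero, TensorProduct.comm_tmul] at h4
  exact hpure N (by simpa using h4)
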